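/- (Lemma 1, one-step variance Bellman inequality.) Fix a time-step h and a state-action pair (s,a). Suppose: (i) |Q̂^{h+1}_{s'a'}(ω)| ≤ Q_max almost surely for every (s',a'); (ii) μ̂^h_{sa} is independent of the random vector (P̂^h_{s' s a} · Q̂^{h+1}_{s'a'})_{s',a'}; (iii) for every (s',a'), the random variables P̂^h_{s' s a} and Q̂^{h+1}_{s'a'} are independent; (iv) E[P̂^h_{s' s a}] > 0 for every s'. Then Var(Q̂^h_{sa}) ≤ ν^h_{sa} + Σ_{s',a'} π^h_{s'a'} E[P̂^h_{s' s a}] · Var(Q̂^{h+1}_{s'a'}), where ν^h_{sa} = Var(μ̂^h_{sa}) + Q_max² Σ_{s'} Var(P̂^h_{s' s a}) / E[P̂^h_{s' s a}]. -/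

import Mathlib

open MeasureTheory ProbabilityTheory

lemma weighted_cs {ι : Type*} (s : Finset ι) (w x : ι → ℝ)
    (hw : ∀ i ∈ s, 0 ≤ w i) (hsum : ∑ i ∈ s, w i ≤ 1) :
    (∑ i ∈ s, w i * x i) ^ 2 ≤ ∑ i ∈ s, w i * x i ^ 2 := by
  have h := Finset.sum_mul_sq_le_sq_mul_sq s (fun i => Real.sqrt (w i))
      (fun i => Real.sqrt (w i) * x i)
  have h1 : ∑ i ∈ s, Real.sqrt (w i) * (Real.sqrt (w i) * x i) = ∑ i ∈ s, w i * x i :=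
    Finset.sum_congr rfl fun i hi => by rw [← mul_assoc, Real.mul_self_sqrt (hw i hi)]
  have h2 : ∑ i ∈ s, Real.sqrt (w i) ^ 2 = ∑ i ∈ s, w i :=
    Finset.sum_congr rfl fun i hi => Real.sq_sqrt (hw i hi)
  have h3 : ∑ i ∈ s, (Real.sqrt (w i) * x i) ^ 2 = ∑ i ∈ s, w i * x i ^ 2 :=
    Finset.sum_congr rfl fun i hi => by rw [mul_pow, Real.sq_sqrt (hw i hi)]
  rw [h1, h2, h3] at h
  calc (∑ i ∈ s, w i * x i) ^ 2 ≤ (∑ i ∈ s, w i) * ∑ i ∈ s, w i * x i ^ 2 := h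
    _ ≤ 1 * ∑ i ∈ s, w i * x i ^ 2 := by
        exact mul_le_mul_of_nonneg_right hsum
          (Finset.sum_nonneg fun i hi => mul_nonneg (hw i hi) (sq_nonneg _))
    _ = _ := one_mul _

/-- Variance is at most the expected squared deviation from any constant. -/
lemma variance_le_integral_sub_sq {Ω : Type*} [MeasureSpace Ω]
    [IsProbabilityMeasure (ℙ : Measure Ω)] {Y : Ω → ℝ} (hY : MemLp Y 2 ℙ) (m : ℝ) :
    variance Y ℙ ≤ ∫ ω, (Y ω - m) ^ 2 := by
  have hint : Integrable Y ℙ := hY.integrable one_le_two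
  have hint2 : Integrable (fun ω => Y ω ^ 2) ℙ := hY.integrable_sq
  have hexp : ∫ ω, (Y ω - m) ^ 2 = (∫ ω, Y ω ^ 2) - 2 * m * (∫ ω, Y ω) + m ^ 2 := by
    have : (fun ω => (Y ω - m) ^ 2) = fun ω => Y ω ^ 2 - (2 * m) * Y ω + m ^ 2 := by
      funext ω; ring
    have i1 : Integrable (fun ω => Y ω ^ 2 - 2 * m * Y ω) ℙ := hint2.sub (hint.const_mul _)
    rw [this, integral_add i1 (integrable_const _),
      integral_sub hint2 (hint.const_mul _), integral_const_mul, integral_const]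
    simp [measure_univ]
  have hvar := variance_eq_sub hY
  simp only [Pi.pow_apply] at hvar
  rw [hvar, hexp]
  nlinarith [sq_nonneg ((∫ ω, Y ω) - m)]

/-- **Lemma 1, one-step variance Bellman inequality.**
Fix a time-step `h` and a state-action pair `(s,a)`. Writing `μ̂ = μ` for the
random mean reward at `(s,a)`, `P s'` for the random transition probability to
`s'`, and `Q' s' a'` for the random Q-value at the next step, suppose:
(i) `|Q' s' a'| ≤ Qmax` a.s.; (ii) `μ` is independent of the random vector
`(P s' * Q' s' a')_{s',a'}`; (iii) `P s'` and `Q' s' a'` are independent for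
every `(s',a')`; (iv) `E[P s'] > 0` for every `s'`. Then
`Var(Q̂ h s a) ≤ ν + ∑_{s',a'} π s' a' * E[P s'] * Var(Q' s' a')` where
`Q̂ h s a = μ + ∑_{s',a'} π s' a' * P s' * Q' s' a'` and
`ν = Var(μ) + Qmax² ∑_{s'} Var(P s') / E[P s']`. -/
theorem variance_bellman_inequality
    {Ω : Type*} [MeasureSpace Ω] [IsProbabilityMeasure (ℙ : Measure Ω)]
    {S A : Type*} [Fintype S] [Fintype A]
    (Qmax : ℝ) (hQmax : 0 < Qmax)
    (π : S → A → ℝ)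
    (hπ_nonneg : ∀ s a, 0 ≤ π s a)
    (hπ_sum : ∀ s, ∑ a : A, π s a = 1)
    (μ : Ω → ℝ) (P : S → Ω → ℝ) (Q' : S → A → Ω → ℝ)
    (hμ_meas : Measurable μ)
    (hμ_L2 : MemLp μ 2 ℙ)
    (hP_meas : ∀ s', Measurable (P s'))
    (hQ'_meas : ∀ s' a', Measurable (Q' s' a'))
    (hP_nonneg : ∀ᵐ ω ∂ℙ, ∀ s', 0 ≤ P s' ω)
    (hP_sum : ∀ᵐ ω ∂ℙ, ∑ s' : S, P s' ω = 1)
    (hQ'_bdd : ∀ s' a', ∀ᵐ ω ∂ℙ, |Q' s' a' ω| ≤ Qmax)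
    (hindep_μ : IndepFun μ (fun ω => fun sa : S × A => P sa.1 ω * Q' sa.1 sa.2 ω) ℙ)
    (hindep_PQ : ∀ s' a', IndepFun (P s') (Q' s' a') ℙ)
    (hEP_pos : ∀ s', 0 < ∫ ω, P s' ω) :
    variance (fun ω => μ ω + ∑ s' : S, ∑ a' : A, π s' a' * P s' ω * Q' s' a' ω) ℙ ≤
      (variance μ ℙ + Qmax ^ 2 * ∑ s' : S, variance (P s') ℙ / ∫ ω, P s' ω) +
        ∑ s' : S, ∑ a' : A, π s' a' * (∫ ω, P s' ω) * variance (Q' s' a') ℙ := by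
  -- Notation
  set p : S → ℝ := fun s' => ∫ ω, P s' ω with hp_def
  have hp_pos : ∀ s', 0 < p s' := hEP_pos
  set Y : Ω → ℝ := fun ω => ∑ sa : S × A, π sa.1 sa.2 * P sa.1 ω * Q' sa.1 sa.2 ω with hY_def
  -- basic a.e. bounds on P
  have hP01 : ∀ᵐ ω ∂ℙ, ∀ s', 0 ≤ P s' ω ∧ P s' ω ≤ 1 := by
    filter_upwards [hP_nonneg, hP_sum] with ω h0 h1 s'
    refine ⟨h0 s', ?_⟩
    calc P s' ω ≤ ∑ t : S, P t ω :=
          Finset.single_le_sum (fun t _ => h0 t) (Finset.mem_univ s')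
      _ = 1 := h1
  have hQbdd : ∀ᵐ ω ∂ℙ, ∀ s' a', |Q' s' a' ω| ≤ Qmax := by
    rw [ae_all_iff]; intro s'; rw [ae_all_iff]; exact hQ'_bdd s'
  -- L² membership
  have hP_L2 : ∀ s', MemLp (P s') 2 ℙ := fun s' =>
    MemLp.of_bound (hP_meas s').aestronglyMeasurable 1 (by
      filter_upwards [hP01] with ω h
      rw [Real.norm_eq_abs, abs_le]; exact ⟨by linarith [(h s').1], (h s').2⟩)
  have hQ_L2 : ∀ s' a', MemLp (Q' s' a') 2 ℙ := fun s' a' =>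
    MemLp.of_bound (hQ'_meas s' a').aestronglyMeasurable Qmax (by
      filter_upwards [hQbdd] with ω h; rw [Real.norm_eq_abs]; exact h s' a')
  have hP_int : ∀ s', Integrable (P s') ℙ := fun s' => (hP_L2 s').integrable one_le_two
  have hQ_int : ∀ s' a', Integrable (Q' s' a') ℙ := fun s' a' =>
    (hQ_L2 s' a').integrable one_le_two
  -- Y is measurable and bounded, hence in L²
  have hY_meas : Measurable Y := by
    apply Finset.measurable_sum
    intro sa _
    exact ((hP_meas sa.1).const_mul _).mul (hQ'_meas sa.1 sa.2)
  have hY_bdd : ∀ᵐ ω ∂ℙ, ‖Y ω‖ ≤ (Fintype.card S : ℝ) * Qmax := by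
    filter_upwards [hP01, hQbdd] with ω hP hQ
    rw [Real.norm_eq_abs]
    calc |Y ω| ≤ ∑ sa : S × A, |π sa.1 sa.2 * P sa.1 ω * Q' sa.1 sa.2 ω| :=
          Finset.abs_sum_le_sum_abs _ _
      _ ≤ ∑ sa : S × A, π sa.1 sa.2 * Qmax := by
          apply Finset.sum_le_sum
          intro sa _
          rw [abs_mul, abs_mul, abs_of_nonneg (hπ_nonneg _ _),
            abs_of_nonneg (hP sa.1).1]
          calc π sa.1 sa.2 * P sa.1 ω * |Q' sa.1 sa.2 ω|
              ≤ π sa.1 sa.2 * 1 * Qmax :=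
                mul_le_mul (mul_le_mul_of_nonneg_left (hP sa.1).2 (hπ_nonneg _ _))
                  (hQ sa.1 sa.2) (abs_nonneg _)
                  (mul_nonneg (hπ_nonneg _ _) zero_le_one)
            _ = π sa.1 sa.2 * Qmax := by ring
      _ = (Fintype.card S : ℝ) * Qmax := by
          rw [Fintype.sum_prod_type]
          have hs : ∀ s' : S, ∑ a' : A, π s' a' * Qmax = Qmax := fun s' => by
            rw [← Finset.sum_mul, hπ_sum, one_mul]
          rw [Finset.sum_congr rfl fun s' _ => hs s', Finset.sum_const,
            Finset.card_univ, nsmul_eq_mul]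
  have hY_L2 : MemLp Y 2 ℙ := MemLp.of_bound hY_meas.aestronglyMeasurable _ hY_bdd
  -- Independence of μ and Y
  have hindep_μY : IndepFun μ Y ℙ := by
    have hφ : Measurable (fun f : S × A → ℝ => ∑ sa : S × A, π sa.1 sa.2 * f sa) :=
      Finset.measurable_sum _ fun sa _ => (measurable_pi_apply sa).const_mul _
    have h := hindep_μ.comp measurable_id hφ
    have heq : ((fun f : S × A → ℝ => ∑ sa : S × A, π sa.1 sa.2 * f sa) ∘
        (fun ω => fun sa : S × A => P sa.1 ω * Q' sa.1 sa.2 ω)) = Y := by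
      funext ω
      simp only [Function.comp_apply, hY_def, mul_assoc]
    rwa [heq] at h
  -- Split the variance of the sum
  have hsplit : variance (fun ω => μ ω + ∑ s' : S, ∑ a' : A,
      π s' a' * P s' ω * Q' s' a' ω) ℙ = variance μ ℙ + variance Y ℙ := by
    have : (fun ω => μ ω + ∑ s' : S, ∑ a' : A, π s' a' * P s' ω * Q' s' a' ω) = μ + Y := by
      funext ω
      simp only [Pi.add_apply, hY_def, Fintype.sum_prod_type]
    rw [this, hindep_μY.variance_add hμ_L2 hY_L2]
  rw [hsplit]
  -- Main bound on variance Y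
  show variance μ ℙ + variance Y ℙ ≤
      (variance μ ℙ + Qmax ^ 2 * ∑ s' : S, variance (P s') ℙ / p s') +
        ∑ s' : S, ∑ a' : A, π s' a' * p s' * variance (Q' s' a') ℙ
  have hmain : variance Y ℙ ≤ Qmax ^ 2 * (∑ s' : S, variance (P s') ℙ / p s') +
      ∑ s' : S, ∑ a' : A, π s' a' * p s' * variance (Q' s' a') ℙ := by
    classical
    set c : S → A → ℝ := fun s' a' => ∫ ω, Q' s' a' ω with hc_def
    set w : S × A → ℝ := fun sa => π sa.1 sa.2 * p sa.1 with hw_def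
    have hw_nonneg : ∀ sa : S × A, 0 ≤ w sa := fun sa =>
      mul_nonneg (hπ_nonneg _ _) (hp_pos sa.1).le
    have hpsum : ∑ s' : S, p s' = 1 := by
      have h1 : ∫ ω, (∑ s' : S, P s' ω) = 1 := by
        rw [integral_congr_ae hP_sum]; simp
      rwa [integral_finset_sum _ (fun s' _ => hP_int s')] at h1
    have hwsum : ∑ sa : S × A, w sa = 1 := by
      rw [Fintype.sum_prod_type]
      have hs : ∀ s' : S, ∑ a' : A, w (s', a') = p s' := fun s' => by
        simp only [hw_def]
        rw [← Finset.sum_mul, hπ_sum, one_mul]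
      rw [Finset.sum_congr rfl fun s' _ => hs s', hpsum]
    set D : S × A → Ω → ℝ :=
      fun sa ω => P sa.1 ω * Q' sa.1 sa.2 ω / p sa.1 - c sa.1 sa.2 with hD_def
    set m : ℝ := ∑ sa : S × A, w sa * c sa.1 sa.2 with hm_def
    -- pointwise Cauchy-Schwarz
    have hptw : ∀ ω, (Y ω - m) ^ 2 ≤ ∑ sa : S × A, w sa * D sa ω ^ 2 := by
      intro ω
      have hYm : Y ω - m = ∑ sa : S × A, w sa * D sa ω := by
        rw [hY_def, hm_def, ← Finset.sum_sub_distrib]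
        refine Finset.sum_congr rfl fun sa _ => ?_
        show π sa.1 sa.2 * P sa.1 ω * Q' sa.1 sa.2 ω - (π sa.1 sa.2 * p sa.1) * c sa.1 sa.2
          = (π sa.1 sa.2 * p sa.1) * (P sa.1 ω * Q' sa.1 sa.2 ω / p sa.1 - c sa.1 sa.2)
        field_simp [(hp_pos sa.1).ne']
      rw [hYm]
      exact weighted_cs _ _ _ (fun sa _ => hw_nonneg sa) (le_of_eq hwsum)
    -- D is square integrable
    have hD_meas : ∀ sa : S × A, Measurable (D sa) := fun sa =>
      (((hP_meas sa.1).mul (hQ'_meas sa.1 sa.2)).div_const _).sub measurable_const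
    have hD_L2 : ∀ sa : S × A, MemLp (D sa) 2 ℙ := by
      intro sa
      apply MemLp.of_bound (hD_meas sa).aestronglyMeasurable
        (Qmax / p sa.1 + |c sa.1 sa.2|)
      filter_upwards [hP01, hQbdd] with ω hP' hQ
      rw [Real.norm_eq_abs]
      refine (abs_sub _ _).trans ?_
      gcongr
      rw [abs_div, abs_of_pos (hp_pos sa.1)]
      gcongr
      · exact (hp_pos sa.1).le
      rw [abs_mul, abs_of_nonneg (hP' sa.1).1]
      calc P sa.1 ω * |Q' sa.1 sa.2 ω| ≤ 1 * Qmax :=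
            mul_le_mul (hP' sa.1).2 (hQ sa.1 sa.2) (abs_nonneg _) zero_le_one
        _ = Qmax := one_mul _
    have hintD2 : ∀ sa : S × A, Integrable (fun ω => D sa ω ^ 2) ℙ := fun sa =>
      (hD_L2 sa).integrable_sq
    -- expectations via independence
    have hPQ_indep_sq : ∀ sa : S × A,
        IndepFun (fun ω => P sa.1 ω ^ 2) (fun ω => Q' sa.1 sa.2 ω ^ 2) ℙ := fun sa =>
      (hindep_PQ sa.1 sa.2).comp (measurable_id.pow_const 2) (measurable_id.pow_const 2)
    have hint_P2 : ∀ s', Integrable (fun ω => P s' ω ^ 2) ℙ := fun s' =>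
      (hP_L2 s').integrable_sq
    have hint_Q2 : ∀ s' a', Integrable (fun ω => Q' s' a' ω ^ 2) ℙ := fun s' a' =>
      (hQ_L2 s' a').integrable_sq
    have hint_P2Q2 : ∀ sa : S × A,
        Integrable (fun ω => P sa.1 ω ^ 2 * Q' sa.1 sa.2 ω ^ 2) ℙ := fun sa =>
      (hPQ_indep_sq sa).integrable_mul (hint_P2 sa.1) (hint_Q2 sa.1 sa.2)
    have hE_P2Q2 : ∀ sa : S × A, ∫ ω, P sa.1 ω ^ 2 * Q' sa.1 sa.2 ω ^ 2 =
        (∫ ω, P sa.1 ω ^ 2) * ∫ ω, Q' sa.1 sa.2 ω ^ 2 := fun sa =>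
      (hPQ_indep_sq sa).integral_mul_eq_mul_integral ((hP_meas sa.1).pow_const 2).aestronglyMeasurable
        ((hQ'_meas sa.1 sa.2).pow_const 2).aestronglyMeasurable
    have hint_PQ : ∀ sa : S × A,
        Integrable (fun ω => P sa.1 ω * Q' sa.1 sa.2 ω) ℙ := fun sa =>
      (hindep_PQ sa.1 sa.2).integrable_mul (hP_int sa.1) (hQ_int sa.1 sa.2)
    have hE_PQ : ∀ sa : S × A,
        ∫ ω, P sa.1 ω * Q' sa.1 sa.2 ω = p sa.1 * c sa.1 sa.2 := fun sa =>
      (hindep_PQ sa.1 sa.2).integral_mul_eq_mul_integral (hP_meas sa.1).aestronglyMeasurable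
        (hQ'_meas sa.1 sa.2).aestronglyMeasurable
    -- computing E[D²]
    have hED2 : ∀ sa : S × A, ∫ ω, D sa ω ^ 2 =
        (∫ ω, P sa.1 ω ^ 2) * (∫ ω, Q' sa.1 sa.2 ω ^ 2) * (1 / p sa.1 ^ 2)
          - c sa.1 sa.2 ^ 2 := by
      intro sa
      have hexp : (fun ω => D sa ω ^ 2) = fun ω =>
          (P sa.1 ω ^ 2 * Q' sa.1 sa.2 ω ^ 2) * (1 / p sa.1 ^ 2)
          - (2 * c sa.1 sa.2 / p sa.1) * (P sa.1 ω * Q' sa.1 sa.2 ω) + c sa.1 sa.2 ^ 2 := by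
        funext ω
        simp only [hD_def]
        field_simp [(hp_pos sa.1).ne']
        ring
      have i1 : Integrable (fun ω =>
          (P sa.1 ω ^ 2 * Q' sa.1 sa.2 ω ^ 2) * (1 / p sa.1 ^ 2)) ℙ :=
        (hint_P2Q2 sa).mul_const _
      have i2 : Integrable (fun ω =>
          (2 * c sa.1 sa.2 / p sa.1) * (P sa.1 ω * Q' sa.1 sa.2 ω)) ℙ :=
        (hint_PQ sa).const_mul _
      have i12 : Integrable (fun ω =>
          (P sa.1 ω ^ 2 * Q' sa.1 sa.2 ω ^ 2) * (1 / p sa.1 ^ 2)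
          - (2 * c sa.1 sa.2 / p sa.1) * (P sa.1 ω * Q' sa.1 sa.2 ω)) ℙ := i1.sub i2
      rw [hexp, integral_add i12 (integrable_const _), integral_sub i1 i2,
        integral_mul_const, integral_const_mul, integral_const, hE_P2Q2 sa, hE_PQ sa]
      simp only [measure_univ, probReal_univ, ENNReal.toReal_one, smul_eq_mul, one_mul]
      field_simp [(hp_pos sa.1).ne']
      ring
    -- pieces for the per-term bound
    have hEQ2_le : ∀ sa : S × A, ∫ ω, Q' sa.1 sa.2 ω ^ 2 ≤ Qmax ^ 2 := by
      intro sa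
      have hb : ∫ ω, Q' sa.1 sa.2 ω ^ 2 ≤ ∫ (_ : Ω), Qmax ^ 2 := by
        refine integral_mono_ae (hint_Q2 sa.1 sa.2) (integrable_const _) ?_
        filter_upwards [hQbdd] with ω h
        calc Q' sa.1 sa.2 ω ^ 2 = |Q' sa.1 sa.2 ω| ^ 2 := (sq_abs _).symm
          _ ≤ Qmax ^ 2 := pow_le_pow_left₀ (abs_nonneg _) (h sa.1 sa.2) 2
      simpa using hb
    have hvarP : ∀ s', ∫ ω, P s' ω ^ 2 = variance (P s') ℙ + p s' ^ 2 := by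
      intro s'
      have h := variance_eq_sub (hP_L2 s')
      simp only [Pi.pow_apply] at h
      have hps : p s' = ∫ ω, P s' ω := rfl
      rw [hps]
      linarith [h]
    have hvarQ : ∀ sa : S × A, ∫ ω, Q' sa.1 sa.2 ω ^ 2 =
        variance (Q' sa.1 sa.2) ℙ + c sa.1 sa.2 ^ 2 := by
      intro sa
      have h := variance_eq_sub (hQ_L2 sa.1 sa.2)
      simp only [Pi.pow_apply] at h
      have hcs : c sa.1 sa.2 = ∫ ω, Q' sa.1 sa.2 ω := rfl
      rw [hcs]
      linarith [h]
    -- per-term bound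
    have key : ∀ (pi pp VP VQ q cc : ℝ), 0 ≤ pi → 0 < pp → 0 ≤ VP →
        q = VQ + cc ^ 2 → q ≤ Qmax ^ 2 →
        pi * pp * ((VP + pp ^ 2) * q * (1 / pp ^ 2) - cc ^ 2) ≤
          pi / pp * VP * Qmax ^ 2 + pi * pp * VQ := by
      intro pi pp VP VQ q cc hpi hpp hVP hq hqle
      have e : pi * pp * ((VP + pp ^ 2) * q * (1 / pp ^ 2) - cc ^ 2) =
          pi / pp * VP * q + pi * pp * (q - cc ^ 2) := by
        field_simp [hpp.ne']
        ring
      have e2 : q - cc ^ 2 = VQ := by rw [hq]; ring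
      rw [e, e2]
      have h3 : pi / pp * VP * q ≤ pi / pp * VP * Qmax ^ 2 :=
        mul_le_mul_of_nonneg_left hqle (mul_nonneg (div_nonneg hpi hpp.le) hVP)
      linarith
    have hterm : ∀ sa : S × A, w sa * ∫ ω, D sa ω ^ 2 ≤
        π sa.1 sa.2 / p sa.1 * variance (P sa.1) ℙ * Qmax ^ 2 +
          π sa.1 sa.2 * p sa.1 * variance (Q' sa.1 sa.2) ℙ := by
      intro sa
      rw [hED2 sa, hvarP sa.1]
      exact key _ _ _ _ _ _ (hπ_nonneg _ _) (hp_pos sa.1) (variance_nonneg _ _)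
        (hvarQ sa) (hEQ2_le sa)
    -- put everything together
    calc variance Y ℙ ≤ ∫ ω, (Y ω - m) ^ 2 := variance_le_integral_sub_sq hY_L2 m
      _ ≤ ∫ ω, ∑ sa : S × A, w sa * D sa ω ^ 2 := by
          refine integral_mono ?_ ?_ hptw
          · exact (hY_L2.sub (memLp_const _)).integrable_sq
          · exact integrable_finset_sum _ fun sa _ => (hintD2 sa).const_mul _
      _ = ∑ sa : S × A, w sa * ∫ ω, D sa ω ^ 2 := by
          rw [integral_finset_sum _ fun sa _ => (hintD2 sa).const_mul _]
          exact Finset.sum_congr rfl fun sa _ => integral_const_mul _ _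
      _ ≤ ∑ sa : S × A, (π sa.1 sa.2 / p sa.1 * variance (P sa.1) ℙ * Qmax ^ 2 +
            π sa.1 sa.2 * p sa.1 * variance (Q' sa.1 sa.2) ℙ) :=
          Finset.sum_le_sum fun sa _ => hterm sa
      _ = Qmax ^ 2 * (∑ s' : S, variance (P s') ℙ / p s') +
          ∑ s' : S, ∑ a' : A, π s' a' * p s' * variance (Q' s' a') ℙ := by
          rw [Finset.sum_add_distrib]
          congr 1
          · rw [Fintype.sum_prod_type]
            have hs : ∀ s' : S, ∑ a' : A,
                π s' a' / p s' * variance (P s') ℙ * Qmax ^ 2 =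
                Qmax ^ 2 * (variance (P s') ℙ / p s') := by
              intro s'
              have he : ∀ a' : A, π s' a' / p s' * variance (P s') ℙ * Qmax ^ 2 =
                  π s' a' * (variance (P s') ℙ / p s' * Qmax ^ 2) := fun a' => by ring
              rw [Finset.sum_congr rfl fun a' _ => he a', ← Finset.sum_mul, hπ_sum,
                one_mul]
              ring
            rw [Finset.sum_congr rfl fun s' _ => hs s', ← Finset.mul_sum]
          · rw [Fintype.sum_prod_type]
  linarith [hmain]
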